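/- Let A be a nonempty subset of F_q, q an odd prime power, with m = |A+A| and n = |A·A|. Then |A|^2 ≤ mn|A|/q + q^{1/2}·√(mn). -/

import Mathlib

open Pointwise Finset

namespace SPEaux

set_option linter.unusedSectionVars false

variable {F : Type*} [Field F] [Fintype F] [DecidableEq F]

/-- `Sum.inl (b,c)` is the line `y = b*x + c`; `Sum.inr a` is the vertical line `x = a`. -/
def onL (p : F × F) (l : (F × F) ⊕ F) : Prop :=
  Sum.elim (fun bc => p.2 = bc.1 * p.1 + bc.2) (fun a => p.1 = a) l

instance (p : F × F) (l : (F × F) ⊕ F) : Decidable (onL p l) :=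
  match l with
  | .inl bc => inferInstanceAs (Decidable (p.2 = bc.1 * p.1 + bc.2))
  | .inr a => inferInstanceAs (Decidable (p.1 = a))

lemma onL_inl (p : F × F) (b c : F) : onL p (Sum.inl (b, c)) ↔ p.2 = b * p.1 + c := Iff.rfl

lemma onL_inr (p : F × F) (a : F) : onL p (Sum.inr a) ↔ p.1 = a := Iff.rfl

lemma lines_through (p : F × F) :
    (univ.filter (fun l : (F × F) ⊕ F => onL p l)).card = Fintype.card F + 1 := by
  have h : univ.filter (fun l : (F × F) ⊕ F => onL p l)
      = insert (Sum.inr p.1)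
          ((univ : Finset F).image (fun b => Sum.inl (b, p.2 - b * p.1))) := by
    ext l
    rw [mem_filter, mem_insert, mem_image]
    constructor
    · rintro ⟨-, hl⟩
      rcases l with ⟨b, c⟩ | a
      · right
        refine ⟨b, mem_univ b, ?_⟩
        rw [onL_inl] at hl
        have hc : p.2 - b * p.1 = c := by linear_combination hl
        rw [hc]
      · left
        rw [onL_inr] at hl
        exact congrArg _ hl.symm
    · rintro (rfl | ⟨b, -, rfl⟩)
      · exact ⟨mem_univ _, rfl⟩
      · refine ⟨mem_univ _, ?_⟩
        rw [onL_inl]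
        ring
  rw [h, card_insert_of_notMem (by simp), card_image_of_injective _
    (fun x y hxy => congrArg Prod.fst (Sum.inl.inj hxy)), card_univ]

lemma lines_through_pair {p p' : F × F} (h : p ≠ p') :
    (univ.filter (fun l : (F × F) ⊕ F => onL p l ∧ onL p' l)).card = 1 := by
  rw [card_eq_one]
  by_cases hx : p.1 = p'.1
  · refine ⟨Sum.inr p.1, ?_⟩
    ext l
    rw [mem_filter, mem_singleton]
    constructor
    · rintro ⟨-, h1, h2⟩
      rcases l with ⟨b, c⟩ | a
      · exfalso
        rw [onL_inl] at h1 h2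
        exact h (Prod.ext hx (by rw [h1, h2, hx]))
      · rw [onL_inr] at h1; rw [h1]
    · rintro rfl
      exact ⟨mem_univ _, rfl, hx.symm⟩
  · have hne : p.1 - p'.1 ≠ 0 := sub_ne_zero.mpr hx
    set b0 : F := (p.2 - p'.2) / (p.1 - p'.1) with hb0
    have hb0mul : b0 * (p.1 - p'.1) = p.2 - p'.2 := div_mul_cancel₀ _ hne
    refine ⟨Sum.inl (b0, p.2 - b0 * p.1), ?_⟩
    ext l
    rw [mem_filter, mem_singleton]
    constructor
    · rintro ⟨-, h1, h2⟩
      rcases l with ⟨b, c⟩ | a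
      · rw [onL_inl] at h1 h2
        have hbmul : b * (p.1 - p'.1) = p.2 - p'.2 := by linear_combination h2 - h1
        have hb : b = b0 := eq_div_of_mul_eq hne hbmul
        rw [hb] at h1
        have hc : p.2 - b0 * p.1 = c := by linear_combination h1
        rw [hb, hc]
      · rw [onL_inr] at h1 h2
        exact absurd (h1.trans h2.symm) hx
    · rintro rfl
      refine ⟨mem_univ _, ?_, ?_⟩
      · rw [onL_inl]; ring
      · rw [onL_inl]
        linear_combination hb0mul

lemma sum_inc (Pt : Finset (F × F)) :
    ∑ l : (F × F) ⊕ F, (Pt.filter (fun p => onL p l)).card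
      = (Fintype.card F + 1) * Pt.card := by
  simp_rw [card_filter]
  rw [Finset.sum_comm]
  simp_rw [← card_filter, lines_through]
  rw [sum_const, smul_eq_mul, mul_comm]

lemma sum_inc_sq (Pt : Finset (F × F)) :
    ∑ l : (F × F) ⊕ F, ((Pt.filter (fun p => onL p l)).card) ^ 2
      = Pt.card ^ 2 + Fintype.card F * Pt.card := by
  have key : ∀ l : (F × F) ⊕ F, ((Pt.filter (fun p => onL p l)).card) ^ 2
      = ((Pt ×ˢ Pt).filter (fun pp => onL pp.1 l ∧ onL pp.2 l)).card := by
    intro l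
    rw [sq, ← card_product, ← filter_product]
  simp_rw [key, card_filter]
  rw [Finset.sum_comm]
  simp_rw [← card_filter]
  have per : ∀ pp : (F × F) × (F × F),
      (univ.filter (fun l : (F × F) ⊕ F => onL pp.1 l ∧ onL pp.2 l)).card
        = if pp.1 = pp.2 then Fintype.card F + 1 else 1 := by
    intro pp
    by_cases hp : pp.1 = pp.2
    · rw [if_pos hp, ← lines_through pp.1]
      congr 1
      ext l
      rw [← hp]
      simp
    · rw [if_neg hp]
      exact lines_through_pair hp
  simp_rw [per]
  rw [Finset.sum_ite, sum_const, sum_const, smul_eq_mul, smul_eq_mul, mul_one]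
  have hdiag : ((Pt ×ˢ Pt).filter (fun pp => pp.1 = pp.2)).card = Pt.card := by
    rw [← Pt.diag_card]
    congr 1
    ext ⟨a, b⟩
    rw [mem_filter, mem_product, mem_diag]
    constructor
    · rintro ⟨⟨ha, -⟩, h⟩
      exact ⟨ha, h⟩
    · rintro ⟨ha, h⟩
      exact ⟨⟨ha, h ▸ ha⟩, h⟩
  have hoff : ((Pt ×ˢ Pt).filter (fun pp => ¬ pp.1 = pp.2)).card
      = Pt.card * Pt.card - Pt.card := by
    have h2 := Finset.card_filter_add_card_filter_not
      (s := Pt ×ˢ Pt) (p := fun pp => pp.1 = pp.2)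
    rw [hdiag, card_product] at h2
    omega
  rw [hdiag, hoff]
  have hle : Pt.card ≤ Pt.card * Pt.card := by
    rcases Nat.eq_zero_or_pos Pt.card with h | h
    · simp [h]
    · exact Nat.le_mul_of_pos_left _ h
  zify [hle]
  ring

lemma variance_le (Pt : Finset (F × F)) :
    ∑ l : (F × F) ⊕ F,
      (((Pt.filter (fun p => onL p l)).card : ℝ)
        - (Pt.card : ℝ) / (Fintype.card F : ℝ)) ^ 2
      ≤ (Fintype.card F : ℝ) * Pt.card := by
  have hq0 : (0:ℝ) < (Fintype.card F : ℝ) := by exact_mod_cast Fintype.card_pos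
  have hqne : (Fintype.card F : ℝ) ≠ 0 := ne_of_gt hq0
  have e1 : ∑ l : (F × F) ⊕ F, ((Pt.filter (fun p => onL p l)).card : ℝ)
      = ((Fintype.card F : ℝ) + 1) * Pt.card := by exact_mod_cast sum_inc Pt
  have e2 : ∑ l : (F × F) ⊕ F, ((Pt.filter (fun p => onL p l)).card : ℝ) ^ 2
      = (Pt.card : ℝ) ^ 2 + (Fintype.card F : ℝ) * Pt.card := by
    exact_mod_cast sum_inc_sq Pt
  have hcard : ((Fintype.card ((F × F) ⊕ F) : ℝ))
      = (Fintype.card F : ℝ) * Fintype.card F + Fintype.card F := by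
    rw [Fintype.card_sum, Fintype.card_prod]
    push_cast
    ring
  have expand : ∑ l : (F × F) ⊕ F,
      (((Pt.filter (fun p => onL p l)).card : ℝ)
        - (Pt.card : ℝ) / (Fintype.card F : ℝ)) ^ 2
      = (∑ l : (F × F) ⊕ F, ((Pt.filter (fun p => onL p l)).card : ℝ) ^ 2)
        - 2 * ((Pt.card : ℝ) / (Fintype.card F : ℝ))
            * (∑ l : (F × F) ⊕ F, ((Pt.filter (fun p => onL p l)).card : ℝ))
        + (Fintype.card ((F × F) ⊕ F) : ℝ)
            * ((Pt.card : ℝ) / (Fintype.card F : ℝ)) ^ 2 :=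
    calc ∑ l : (F × F) ⊕ F,
        (((Pt.filter (fun p => onL p l)).card : ℝ)
          - (Pt.card : ℝ) / (Fintype.card F : ℝ)) ^ 2
        = ∑ l : (F × F) ⊕ F,
          (((Pt.filter (fun p => onL p l)).card : ℝ) ^ 2
            - 2 * ((Pt.card : ℝ) / (Fintype.card F : ℝ))
              * ((Pt.filter (fun p => onL p l)).card : ℝ)
            + ((Pt.card : ℝ) / (Fintype.card F : ℝ)) ^ 2) := by
          apply Finset.sum_congr rfl
          intro l _
          ring
      _ = _ := by
          rw [Finset.sum_add_distrib, Finset.sum_sub_distrib, ← Finset.mul_sum,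
            Finset.sum_const, nsmul_eq_mul, Finset.card_univ]
  rw [expand, e1, e2, hcard]
  have : (Pt.card : ℝ) ^ 2 + (Fintype.card F : ℝ) * Pt.card
      - 2 * ((Pt.card : ℝ) / (Fintype.card F : ℝ)) * (((Fintype.card F : ℝ) + 1) * Pt.card)
      + ((Fintype.card F : ℝ) * Fintype.card F + Fintype.card F)
        * ((Pt.card : ℝ) / (Fintype.card F : ℝ)) ^ 2
      = (Fintype.card F : ℝ) * Pt.card - (Pt.card : ℝ) ^ 2 / Fintype.card F := by
    field_simp
    ring
  rw [this]
  have hnn : (0:ℝ) ≤ (Pt.card : ℝ) ^ 2 / Fintype.card F := by positivity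
  linarith

lemma vinh (Pt : Finset (F × F)) (L : Finset ((F × F) ⊕ F)) :
    (∑ l ∈ L, ((Pt.filter (fun p => onL p l)).card : ℝ))
      ≤ (Pt.card : ℝ) * L.card / Fintype.card F
        + Real.sqrt ((Fintype.card F : ℝ) * Pt.card * L.card) := by
  have hq0 : (0:ℝ) < (Fintype.card F : ℝ) := by exact_mod_cast Fintype.card_pos
  set μ : ℝ := (Pt.card : ℝ) / (Fintype.card F : ℝ) with hμ
  set g : (F × F) ⊕ F → ℝ := fun l => ((Pt.filter (fun p => onL p l)).card : ℝ) - μ with hg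
  have split : (∑ l ∈ L, ((Pt.filter (fun p => onL p l)).card : ℝ))
      = (∑ l ∈ L, g l) + L.card * μ := by
    rw [hg]
    rw [Finset.sum_sub_distrib, Finset.sum_const, nsmul_eq_mul]
    ring
  have hCS : (∑ l ∈ L, g l) ^ 2 ≤ (L.card : ℝ) * ∑ l ∈ L, g l ^ 2 :=
    sq_sum_le_card_mul_sum_sq
  have hsub : ∑ l ∈ L, g l ^ 2 ≤ ∑ l : (F × F) ⊕ F, g l ^ 2 :=
    Finset.sum_le_sum_of_subset_of_nonneg (Finset.subset_univ L)
      (fun l _ _ => sq_nonneg _)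
  have hvar := variance_le Pt
  have hbound : (∑ l ∈ L, g l) ^ 2 ≤ (Fintype.card F : ℝ) * Pt.card * L.card := by
    calc (∑ l ∈ L, g l) ^ 2 ≤ (L.card : ℝ) * ∑ l ∈ L, g l ^ 2 := hCS
      _ ≤ (L.card : ℝ) * ((Fintype.card F : ℝ) * Pt.card) := by
          apply mul_le_mul_of_nonneg_left _ (by positivity)
          exact le_trans hsub hvar
      _ = (Fintype.card F : ℝ) * Pt.card * L.card := by ring
  have hs : (∑ l ∈ L, g l) ≤ Real.sqrt ((Fintype.card F : ℝ) * Pt.card * L.card) := by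
    calc (∑ l ∈ L, g l) ≤ |∑ l ∈ L, g l| := le_abs_self _
      _ = Real.sqrt ((∑ l ∈ L, g l) ^ 2) := (Real.sqrt_sq_eq_abs _).symm
      _ ≤ Real.sqrt ((Fintype.card F : ℝ) * Pt.card * L.card) :=
          Real.sqrt_le_sqrt hbound
  rw [split]
  have : (L.card : ℝ) * μ = (Pt.card : ℝ) * L.card / Fintype.card F := by
    rw [hμ]; ring
  rw [this]
  linarith

lemma card_le_card_mul (A : Finset F) (hA : A.Nonempty) : A.card ≤ (A * A).card := by
  obtain ⟨a, ha⟩ := hA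
  by_cases h : ∃ b ∈ A, b ≠ 0
  · obtain ⟨b, hb, hb0⟩ := h
    have h1 : A.card = (A.image (fun x => b * x)).card :=
      (card_image_of_injective _ (mul_right_injective₀ hb0)).symm
    rw [h1]
    apply card_le_card
    intro y hy
    rw [mem_image] at hy
    obtain ⟨x, hx, rfl⟩ := hy
    exact mul_mem_mul hb hx
  · push_neg at h
    have hsub : A ⊆ {0} := fun x hx => mem_singleton.mpr (h x hx)
    have h1 : A.card ≤ 1 := le_trans (card_le_card hsub) (by simp)
    exact le_trans h1 (Finset.Nonempty.card_pos ⟨a * a, mul_mem_mul ha ha⟩)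

/-- The line associated to a parameter pair `(a,b)`: if `b ≠ 0` it is `y = b·x - a·b`
(which contains `(a+c, b·c)` for every `c`), and if `b = 0` it is the vertical line `x = a`. -/
def lineOf (ab : F × F) : (F × F) ⊕ F :=
  if ab.2 = 0 then Sum.inr ab.1 else Sum.inl (ab.2, -(ab.1 * ab.2))

lemma lineOf_injective : Function.Injective (lineOf (F := F)) := by
  intro x y hxy
  unfold lineOf at hxy
  by_cases hx : x.2 = 0 <;> by_cases hy : y.2 = 0 <;>
    simp only [hx, hy, if_pos, if_neg, if_true, if_false] at hxy
  · exact Prod.ext (Sum.inr.inj hxy) (hx.trans hy.symm)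
  · exact absurd hxy (by simp)
  · exact absurd hxy (by simp)
  · have h2 := Sum.inl.inj hxy
    have hb : x.2 = y.2 := congrArg Prod.fst h2
    have hc : -(x.1 * x.2) = -(y.1 * y.2) := congrArg Prod.snd h2
    have ha : x.1 = y.1 := by
      have := neg_injective hc
      rw [hb] at this
      exact mul_right_cancel₀ hy this
    exact Prod.ext ha hb

lemma inc_lower (A : Finset F) (ab : F × F) (hab : ab ∈ A ×ˢ A) :
    A.card ≤ ((((A + A) ×ˢ (A * A)).filter (fun p => onL p (lineOf ab))).card) := by
  rw [mem_product] at hab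
  obtain ⟨ha, hb⟩ := hab
  by_cases h0 : ab.2 = 0
  · -- vertical line x = ab.1 : contains (ab.1, p) for every p ∈ A*A
    have h0A : (0 : F) ∈ A := h0 ▸ hb
    have hsub : (A * A).image (fun p => (ab.1, p))
        ⊆ ((A + A) ×ˢ (A * A)).filter (fun p => onL p (lineOf ab)) := by
      intro y hy
      rw [mem_image] at hy
      obtain ⟨p, hp, rfl⟩ := hy
      rw [mem_filter, mem_product]
      refine ⟨⟨?_, hp⟩, ?_⟩
      · have := Finset.add_mem_add ha h0A
        rwa [add_zero] at this
      · rw [lineOf, if_pos h0, onL_inr]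
    calc A.card ≤ (A * A).card := card_le_card_mul A ⟨ab.2, hb⟩
      _ = ((A * A).image (fun p => (ab.1, p))).card :=
          (card_image_of_injective _ (fun x y h => congrArg Prod.snd h)).symm
      _ ≤ _ := card_le_card hsub
  · -- slanted line y = b x - a b : contains (a+c, b c) for c ∈ A
    have hsub : A.image (fun c => (ab.1 + c, ab.2 * c))
        ⊆ ((A + A) ×ˢ (A * A)).filter (fun p => onL p (lineOf ab)) := by
      intro y hy
      rw [mem_image] at hy
      obtain ⟨c, hc, rfl⟩ := hy
      rw [mem_filter, mem_product]
      refine ⟨⟨Finset.add_mem_add ha hc, Finset.mul_mem_mul hb hc⟩, ?_⟩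
      rw [lineOf, if_neg h0, onL_inl]
      ring
    calc A.card = (A.image (fun c => (ab.1 + c, ab.2 * c))).card :=
        (card_image_of_injective _ (fun x y h => by
          have := congrArg Prod.fst h
          simpa using this)).symm
      _ ≤ _ := card_le_card hsub

lemma inc_total (A : Finset F) :
    A.card ^ 3 ≤ ∑ l ∈ (A ×ˢ A).image lineOf,
      (((A + A) ×ˢ (A * A)).filter (fun p => onL p l)).card := by
  rw [Finset.sum_image (fun x _ y _ h => lineOf_injective h)]
  calc A.card ^ 3 = (A ×ˢ A).card * A.card := by rw [card_product]; ring
    _ ≤ ∑ ab ∈ A ×ˢ A, (((A + A) ×ˢ (A * A)).filter (fun p => onL p (lineOf ab))).card := by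
        rw [← smul_eq_mul]
        exact Finset.card_nsmul_le_sum _ _ _ (fun ab hab => inc_lower A ab hab)

end SPEaux

open SPEaux in
/-- Sum-product estimate: for `A ⊆ F_q` nonempty, `q` odd,
`|A|² ≤ mn|A|/q + q^{1/2}√(mn)` where `m = |A+A|`, `n = |A·A|`. -/
theorem sum_product_estimate {F : Type*} [Field F] [Fintype F] [DecidableEq F]
    (q : ℕ) (hq : Fintype.card F = q) (hodd : Odd q)
    (A : Finset F) (hA : A.Nonempty) (m n : ℕ)
    (hm : m = (A + A).card) (hn : n = (A * A).card) :
    (A.card : ℝ) ^ 2 ≤ (m : ℝ) * n * A.card / q + Real.sqrt q * Real.sqrt ((m : ℝ) * n) := by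
  have hq0 : 0 < q := hq ▸ Fintype.card_pos
  have hqR : (0:ℝ) < q := by exact_mod_cast hq0
  have hk0 : 0 < A.card := hA.card_pos
  have hkR : (0:ℝ) < A.card := by exact_mod_cast hk0
  set L : Finset ((F × F) ⊕ F) := (A ×ˢ A).image lineOf with hL
  have hLcard : L.card = A.card * A.card := by
    rw [hL, card_image_of_injective _ lineOf_injective]
    · rw [card_product]
  set Pt : Finset (F × F) := (A + A) ×ˢ (A * A) with hPt
  have hPtcard : Pt.card = m * n := by rw [hPt, card_product, hm, hn]
  have h1 : (A.card : ℝ) ^ 3 ≤ ∑ l ∈ L, ((Pt.filter (fun p => onL p l)).card : ℝ) := by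
    calc ((A.card : ℝ)) ^ 3 = ((A.card ^ 3 : ℕ) : ℝ) := by push_cast; ring
      _ ≤ _ := by exact_mod_cast inc_total A
  have h2 := vinh Pt L
  rw [hq] at h2
  have hPtR : (Pt.card : ℝ) = (m : ℝ) * n := by exact_mod_cast hPtcard
  have hLR : (L.card : ℝ) = (A.card : ℝ) * A.card := by exact_mod_cast hLcard
  rw [hPtR, hLR] at h2
  have hsqrt : Real.sqrt ((q : ℝ) * ((m : ℝ) * n) * ((A.card : ℝ) * A.card))
      = Real.sqrt q * Real.sqrt ((m : ℝ) * n) * A.card := by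
    rw [Real.sqrt_mul (by positivity), Real.sqrt_mul (by positivity),
      show ((A.card : ℝ) * A.card) = (A.card : ℝ) ^ 2 by ring, Real.sqrt_sq hkR.le]
  rw [hsqrt] at h2
  have h3 := le_trans h1 h2
  have hfin : (A.card : ℝ) ^ 2 * A.card
      ≤ ((m : ℝ) * n * A.card / q + Real.sqrt q * Real.sqrt ((m : ℝ) * n)) * A.card := by
    have e1 : (A.card : ℝ) ^ 2 * A.card = (A.card : ℝ) ^ 3 := by ring
    have e2 : ((m : ℝ) * n * A.card / q + Real.sqrt q * Real.sqrt ((m : ℝ) * n)) * A.card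
        = (m : ℝ) * n * ((A.card : ℝ) * A.card) / q
          + Real.sqrt q * Real.sqrt ((m : ℝ) * n) * A.card := by ring
    rw [e1, e2]
    exact h3
  exact le_of_mul_le_mul_right hfin hkR
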